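/- Let A and B be real-valued random variables on a probability space such that |A − E[A]| ≤ Δ almost surely for a constant Δ ≥ 0, and B ∈ [l, L] almost surely with 0 < l ≤ L. Then |Cov(A, 1/B)| ≤ |Cov(A, B)| / l² + (Δ/l³) · Var(B). -/

import Mathlib

open MeasureTheory ProbabilityTheory

/-- Covariance of two real random variables: `Cov(U, V) = E[UV] − E[U]·E[V]`. -/
noncomputable def covar {Ω : Type*} [MeasureSpace Ω] (U V : Ω → ℝ) : ℝ :=
  (∫ ω, U ω * V ω) - (∫ ω, U ω) * (∫ ω, V ω)

/-- Variance of a real random variable: `Var(U) = Cov(U, U)`. -/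
noncomputable def var {Ω : Type*} [MeasureSpace Ω] (U : Ω → ℝ) : ℝ := covar U U

/-- If `|A − E[A]| ≤ Δ` almost surely and `B ∈ [l, L]` almost surely with `0 < l ≤ L`,
then `|Cov(A, 1/B)| ≤ |Cov(A, B)|/l² + (Δ/l³)·Var(B)`. -/
theorem cov_with_inverse_refined_bound
    {Ω : Type*} [MeasureSpace Ω] [IsProbabilityMeasure (ℙ : Measure Ω)]
    (l L Δ : ℝ) (hl : 0 < l) (hlL : l ≤ L) (hΔ : 0 ≤ Δ)
    (A B : Ω → ℝ) (hAint : Integrable A ℙ) (hBmeas : Measurable B)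
    (hA : ∀ᵐ ω ∂ℙ, |A ω - ∫ ω', A ω'| ≤ Δ)
    (hB : ∀ᵐ ω ∂ℙ, B ω ∈ Set.Icc l L) :
    |covar A (fun ω => 1 / B ω)|
      ≤ |covar A B| / l ^ 2 + (Δ / l ^ 3) * var B := by
  set m : ℝ := ∫ ω, A ω with hm
  set μ : ℝ := ∫ ω, B ω with hμ
  have hL0 : (0:ℝ) < L := lt_of_lt_of_le hl hlL
  -- integrability of B
  have hBint : Integrable B ℙ := by
    refine Integrable.mono' (integrable_const L) hBmeas.aestronglyMeasurable ?_
    filter_upwards [hB] with ω h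
    rw [Real.norm_eq_abs, abs_le]
    exact ⟨le_trans (by linarith) h.1, h.2⟩
  have hμl : l ≤ μ := by
    rw [hμ]
    have h1 : (∫ _ : Ω, l ∂ℙ) ≤ ∫ ω, B ω := integral_mono_ae (integrable_const l)
        hBint (hB.mono fun ω h => h.1)
    simpa using h1
  have hμL : μ ≤ L := by
    rw [hμ]
    have h1 : (∫ ω, B ω) ≤ ∫ _ : Ω, L ∂ℙ := integral_mono_ae hBint
        (integrable_const L) (hB.mono fun ω h => h.2)
    simpa using h1
  have hμpos : 0 < μ := lt_of_lt_of_le hl hμl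
  -- the remainder term
  set R : Ω → ℝ := fun ω => (B ω - μ) ^ 2 / (B ω * μ ^ 2) with hR
  have hRmeas : Measurable R := by
    apply Measurable.div
    · exact (hBmeas.sub measurable_const).pow measurable_const
    · exact hBmeas.mul measurable_const
  have hRbound : ∀ᵐ ω ∂ℙ, 0 ≤ R ω ∧ R ω ≤ (B ω - μ) ^ 2 / (l * μ ^ 2) := by
    filter_upwards [hB] with ω h
    have hb : 0 < B ω := lt_of_lt_of_le hl h.1
    have hpos : 0 < B ω * μ ^ 2 := mul_pos hb (pow_pos hμpos 2)
    constructor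
    · positivity
    · exact div_le_div_of_nonneg_left (sq_nonneg _) (by positivity)
        (mul_le_mul_of_nonneg_right h.1 (sq_nonneg μ))
  have hRub : ∀ᵐ ω ∂ℙ, R ω ≤ (L - l) ^ 2 / l ^ 3 := by
    filter_upwards [hB] with ω h
    have h1 : (B ω - μ) ^ 2 ≤ (L - l) ^ 2 := by nlinarith [h.1, h.2]
    have hμ2 : l ^ 2 ≤ μ ^ 2 := by nlinarith
    have h2 : l ^ 3 ≤ B ω * μ ^ 2 := by
      nlinarith [mul_le_mul h.1 hμ2 (by positivity) (le_trans hl.le h.1)]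
    exact div_le_div₀ (by positivity) h1 (by positivity) h2
  have hRint : Integrable R ℙ := by
    refine Integrable.mono' (integrable_const ((L - l) ^ 2 / l ^ 3))
      hRmeas.aestronglyMeasurable ?_
    filter_upwards [hRbound, hRub] with ω h1 h2
    rw [Real.norm_eq_abs, abs_of_nonneg h1.1]; exact h2
  -- integrability of products
  have hgint : Integrable (fun ω => A ω - m) ℙ := hAint.sub (integrable_const m)
  have hgmeas : AEStronglyMeasurable (fun ω => A ω - m) ℙ :=
    hAint.aestronglyMeasurable.sub aestronglyMeasurable_const
  have hABint : Integrable (fun ω => A ω * B ω) ℙ := by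
    refine Integrable.mono' (hAint.norm.mul_const L)
      (hAint.aestronglyMeasurable.mul hBmeas.aestronglyMeasurable) ?_
    filter_upwards [hB] with ω h
    rw [Real.norm_eq_abs, abs_mul]
    have : |B ω| ≤ L := by rw [abs_le]; exact ⟨le_trans (by linarith) h.1, h.2⟩
    exact mul_le_mul_of_nonneg_left this (abs_nonneg _) |>.trans_eq rfl
  have hfint : Integrable (fun ω => 1 / B ω) ℙ := by
    refine Integrable.mono' (integrable_const (1 / l))
      (measurable_const.div hBmeas).aestronglyMeasurable ?_
    filter_upwards [hB] with ω h
    have hb : 0 < B ω := lt_of_lt_of_le hl h.1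
    rw [Real.norm_eq_abs, abs_of_nonneg (one_div_pos.mpr hb).le]
    exact one_div_le_one_div_of_le hl h.1
  have hAfint : Integrable (fun ω => A ω * (1 / B ω)) ℙ := by
    refine Integrable.mono' (hAint.norm.mul_const (1 / l))
      (hAint.aestronglyMeasurable.mul
        (measurable_const.div hBmeas).aestronglyMeasurable) ?_
    filter_upwards [hB] with ω h
    rw [Real.norm_eq_abs, abs_mul]
    refine mul_le_mul_of_nonneg_left ?_ (abs_nonneg _)
    have hb : 0 < B ω := lt_of_lt_of_le hl h.1
    rw [abs_of_nonneg (one_div_pos.mpr hb).le]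
    exact one_div_le_one_div_of_le hl h.1
  have hgRint : Integrable (fun ω => (A ω - m) * R ω) ℙ := by
    refine Integrable.mono' (integrable_const (Δ * ((L - l) ^ 2 / l ^ 3)))
      (hgmeas.mul hRmeas.aestronglyMeasurable) ?_
    filter_upwards [hA, hRbound, hRub] with ω h1 h2 h3
    rw [Real.norm_eq_abs, abs_mul, abs_of_nonneg h2.1]
    exact mul_le_mul h1 h3 h2.1 hΔ
  have hsqint : Integrable (fun ω => (B ω - μ) ^ 2) ℙ := by
    refine Integrable.mono' (integrable_const ((L - l) ^ 2))
      ((hBmeas.sub measurable_const).pow measurable_const).aestronglyMeasurable ?_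
    filter_upwards [hB] with ω h
    rw [Real.norm_eq_abs, abs_of_nonneg (sq_nonneg _)]
    nlinarith [h.1, h.2]
  have hgBint : Integrable (fun ω => (A ω - m) * B ω) ℙ := by
    have : (fun ω => (A ω - m) * B ω) = fun ω => A ω * B ω - m * B ω := by
      funext ω; ring
    rw [this]; exact hABint.sub (hBint.const_mul m)
  -- ∫ (A - m) = 0
  have hg0 : (∫ ω, (A ω - m)) = 0 := by
    rw [integral_sub hAint (integrable_const m)]
    simp [hm]
  -- covariance identities
  have hcovAB : (∫ ω, (A ω - m) * B ω) = covar A B := by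
    have h : (fun ω => (A ω - m) * B ω) = fun ω => A ω * B ω - m * B ω := by
      funext ω; ring
    rw [h, integral_sub hABint (hBint.const_mul m), integral_const_mul]
    rfl
  have hcovAf : (∫ ω, (A ω - m) * (1 / B ω)) = covar A (fun ω => 1 / B ω) := by
    have h : (fun ω => (A ω - m) * (1 / B ω))
        = fun ω => A ω * (1 / B ω) - m * (1 / B ω) := by
      funext ω; ring
    rw [h, integral_sub hAfint (hfint.const_mul m), integral_const_mul]
    rfl
  -- pointwise algebraic identity
  have hid : ∀ᵐ ω ∂ℙ, (A ω - m) * (1 / B ω)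
      = ((2 / μ) * (A ω - m) - (1 / μ ^ 2) * ((A ω - m) * B ω))
        + (A ω - m) * R ω := by
    filter_upwards [hB] with ω h
    have hb : B ω ≠ 0 := ne_of_gt (lt_of_lt_of_le hl h.1)
    have hμ0 : μ ≠ 0 := ne_of_gt hμpos
    rw [hR]
    field_simp
    ring
  -- split the integral
  have hsplit : covar A (fun ω => 1 / B ω)
      = -(covar A B) / μ ^ 2 + ∫ ω, (A ω - m) * R ω := by
    have h1 : Integrable (fun ω => 2 / μ * (A ω - m)
        - 1 / μ ^ 2 * ((A ω - m) * B ω)) ℙ :=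
      (hgint.const_mul _).sub (hgBint.const_mul _)
    rw [← hcovAf, integral_congr_ae hid, integral_add h1 hgRint,
      integral_sub (hgint.const_mul _) (hgBint.const_mul _),
      integral_const_mul, integral_const_mul, hg0, hcovAB]
    ring
  -- bound the remainder integral
  have hRint_le : (∫ ω, R ω) ≤ (∫ ω, (B ω - μ) ^ 2) / (l * μ ^ 2) := by
    have := integral_mono_ae hRint (hsqint.div_const (l * μ ^ 2))
      (hRbound.mono fun ω h => h.2)
    rwa [integral_div] at this
  have hvarB : (∫ ω, (B ω - μ) ^ 2) = var B := by
    have hB2int : Integrable (fun ω => B ω * B ω) ℙ := by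
      refine Integrable.mono' (integrable_const (L * L))
        (hBmeas.mul hBmeas).aestronglyMeasurable ?_
      filter_upwards [hB] with ω h
      rw [Real.norm_eq_abs, abs_mul]
      have : |B ω| ≤ L := by rw [abs_le]; exact ⟨le_trans (by linarith) h.1, h.2⟩
      exact mul_le_mul this this (abs_nonneg _) (le_of_lt hL0)
    have h : (fun ω => (B ω - μ) ^ 2)
        = fun ω => B ω * B ω - (2 * μ) * B ω + μ ^ 2 := by
      funext ω; ring
    have h2 : Integrable (fun ω => B ω * B ω - 2 * μ * B ω) ℙ :=
      hB2int.sub (hBint.const_mul (2 * μ))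
    rw [h, integral_add h2 (integrable_const _),
      integral_sub hB2int (hBint.const_mul _),
      integral_const_mul, integral_const]
    simp only [probReal_univ, smul_eq_mul, one_mul]
    show _ = (∫ ω, B ω * B ω) - μ * μ
    ring
  have hvar_nonneg : 0 ≤ var B := by
    rw [← hvarB]
    exact integral_nonneg fun ω => sq_nonneg _
  have hE : |∫ ω, (A ω - m) * R ω| ≤ (Δ / l ^ 3) * var B := by
    calc |∫ ω, (A ω - m) * R ω| ≤ ∫ ω, |A ω - m| * |R ω| := by
          simpa [Real.norm_eq_abs] using
            norm_integral_le_integral_norm (μ := (ℙ : Measure Ω))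
              (fun ω => (A ω - m) * R ω)
    _ ≤ ∫ ω, Δ * R ω := by
          refine integral_mono_ae (by simpa [abs_mul] using hgRint.abs)
            (hRint.const_mul Δ) ?_
          filter_upwards [hA, hRbound] with ω h1 h2
          rw [abs_of_nonneg h2.1]
          exact mul_le_mul_of_nonneg_right h1 h2.1
    _ = Δ * ∫ ω, R ω := integral_const_mul _ _
    _ ≤ Δ * ((∫ ω, (B ω - μ) ^ 2) / (l * μ ^ 2)) :=
          mul_le_mul_of_nonneg_left hRint_le hΔ
    _ = Δ * (var B / (l * μ ^ 2)) := by rw [hvarB]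
    _ ≤ (Δ / l ^ 3) * var B := by
          rw [mul_div_assoc', div_mul_eq_mul_div, mul_comm Δ (var B),
            mul_div_assoc, mul_div_assoc]
          refine mul_le_mul_of_nonneg_left ?_ hvar_nonneg
          refine div_le_div_of_nonneg_left hΔ (by positivity) ?_
          have : l ^ 2 ≤ μ ^ 2 := by nlinarith
          nlinarith
  calc |covar A (fun ω => 1 / B ω)|
      = |(-(covar A B) / μ ^ 2) + ∫ ω, (A ω - m) * R ω| := by rw [hsplit]
    _ ≤ |(-(covar A B) / μ ^ 2)| + |∫ ω, (A ω - m) * R ω| := abs_add_le _ _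
    _ ≤ |covar A B| / l ^ 2 + (Δ / l ^ 3) * var B := by
        refine add_le_add ?_ hE
        rw [abs_div, abs_neg, abs_of_nonneg (sq_nonneg μ)]
        refine div_le_div_of_nonneg_left (abs_nonneg _) (by positivity) ?_
        nlinarith
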